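/- If F is a real symplectic matrix and v ∈ ℝ^{2n} satisfies (I + Fᵀ)v = 0 and (I − Fᵀ)v = 0, then v = 0; more generally, in the proof of invertibility of I + Fᵀ + 𝓜*(I − Fᵀ) with 𝓜 = JM, Im M positive definite: any z ∈ ℂ^{2n} with (I + Fᵀ + 𝓜*(I − Fᵀ))z = 0 satisfies (I − Fᵀ)z = 0 and hence z = 0. -/

import Mathlib

open Matrix Complex

lemma aux_pos {ι : Type*} [Fintype ι] (N : Matrix ι ι ℝ) (hN : N.PosDef)
    (u : ι → ℂ) (h : star u ⬝ᵥ ((N.map Complex.ofReal) *ᵥ u) = 0) : u = 0 := by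
  set a : ι → ℝ := fun i => (u i).re with ha
  set b : ι → ℝ := fun i => (u i).im with hb
  have hre : (star u ⬝ᵥ ((N.map Complex.ofReal) *ᵥ u)).re
      = a ⬝ᵥ (N *ᵥ a) + b ⬝ᵥ (N *ᵥ b) := by
    simp only [dotProduct, mulVec, map_apply, Pi.star_apply, RCLike.star_def]
    rw [Complex.re_sum]
    rw [← Finset.sum_add_distrib]
    refine Finset.sum_congr rfl fun i _ => ?_
    rw [Finset.mul_sum, Finset.mul_sum, Finset.mul_sum, Complex.re_sum,
      ← Finset.sum_add_distrib]
    refine Finset.sum_congr rfl fun j _ => ?_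
    simp [Complex.mul_re, Complex.mul_im, ha, hb]
  rw [h] at hre
  have h0 : a ⬝ᵥ (N *ᵥ a) + b ⬝ᵥ (N *ᵥ b) = 0 := hre.symm
  have hsa : 0 ≤ a ⬝ᵥ (N *ᵥ a) := by simpa using hN.posSemidef.dotProduct_mulVec_nonneg a
  have hsb : 0 ≤ b ⬝ᵥ (N *ᵥ b) := by simpa using hN.posSemidef.dotProduct_mulVec_nonneg b
  have haz : a = 0 := by
    by_contra hc
    have := hN.dotProduct_mulVec_pos hc
    simp only [star_trivial] at this
    linarith
  have hbz : b = 0 := by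
    by_contra hc
    have := hN.dotProduct_mulVec_pos hc
    simp only [star_trivial] at this
    linarith
  funext i
  exact Complex.ext (congrFun haz i) (congrFun hbz i)

lemma aux_real {ι : Type*} [Fintype ι] (S : Matrix ι ι ℝ) (hs : Sᵀ = S) (z : ι → ℂ) :
    star (star z ⬝ᵥ ((S.map Complex.ofReal) *ᵥ z)) = star z ⬝ᵥ ((S.map Complex.ofReal) *ᵥ z) := by
  simp only [dotProduct, mulVec, map_apply, Pi.star_apply, RCLike.star_def,
    Finset.mul_sum, star_sum, star_mul']
  rw [Finset.sum_comm]
  refine Finset.sum_congr rfl fun i _ => Finset.sum_congr rfl fun j _ => ?_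
  have hsij : S j i = S i j := by
    have := congrFun (congrFun hs i) j
    simpa [transpose_apply] using this
  simp [hsij, Complex.conj_ofReal]
  ring

theorem stmt_19 (n : ℕ) (F : Matrix (Fin n ⊕ Fin n) (Fin n ⊕ Fin n) ℝ)
    (hF : Fᵀ * (Matrix.fromBlocks 0 1 (-1) 0) * F = (Matrix.fromBlocks 0 1 (-1) 0 :
      Matrix (Fin n ⊕ Fin n) (Fin n ⊕ Fin n) ℝ))
    (M : Matrix (Fin n ⊕ Fin n) (Fin n ⊕ Fin n) ℂ) (hMsym : Mᵀ = M)
    (hMpos : (M.map Complex.im).PosDef) :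
    (∀ v : (Fin n ⊕ Fin n) → ℝ,
      (1 + Fᵀ) *ᵥ v = 0 → (1 - Fᵀ) *ᵥ v = 0 → v = 0) ∧
    (∀ z : (Fin n ⊕ Fin n) → ℂ,
      (1 + (F.map Complex.ofReal)ᵀ +
        ((Matrix.fromBlocks 0 1 (-1) 0 : Matrix (Fin n ⊕ Fin n) (Fin n ⊕ Fin n) ℂ) * M)ᴴ *
          (1 - (F.map Complex.ofReal)ᵀ)) *ᵥ z = 0 →
      (1 - (F.map Complex.ofReal)ᵀ) *ᵥ z = 0 ∧ z = 0) := by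
  constructor
  · intro v h1 h2
    rw [Matrix.add_mulVec, Matrix.one_mulVec] at h1
    rw [Matrix.sub_mulVec, Matrix.one_mulVec] at h2
    funext i
    have e1 := congrFun h1 i
    have e2 := congrFun h2 i
    simp only [Pi.add_apply, Pi.sub_apply, Pi.zero_apply] at e1 e2 ⊢
    linarith
  · intro z hz
    set Jr : Matrix (Fin n ⊕ Fin n) (Fin n ⊕ Fin n) ℝ := Matrix.fromBlocks 0 1 (-1) 0 with hJr
    -- real facts
    have hJr2 : Jr * Jr = -1 := by
      rw [hJr, Matrix.fromBlocks_multiply]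
      rw [← Matrix.fromBlocks_one, Matrix.fromBlocks_neg]
      simp
    have hGF : (-(Jr * Fᵀ * Jr)) * F = 1 := by
      have h1 : Jr * (Fᵀ * Jr * F) = Jr * Jr := by rw [hF]
      rw [hJr2] at h1
      calc (-(Jr * Fᵀ * Jr)) * F = -(Jr * (Fᵀ * Jr * F)) := by noncomm_ring
      _ = 1 := by rw [h1]; simp
    have hFG : F * (-(Jr * Fᵀ * Jr)) = 1 := mul_eq_one_comm.mpr hGF
    have hFJF : F * Jr * Fᵀ = Jr := by
      have h2 : F * (-(Jr * Fᵀ * Jr)) * (-Jr) = 1 * (-Jr) := by rw [hFG]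
      have h3 : F * (-(Jr * Fᵀ * Jr)) * (-Jr) = (F * Jr * Fᵀ) * (Jr * Jr) := by noncomm_ring
      rw [h3, hJr2] at h2
      simpa using h2
    -- complexification
    set Fc : Matrix (Fin n ⊕ Fin n) (Fin n ⊕ Fin n) ℂ := F.map Complex.ofReal with hFcd
    set Jc : Matrix (Fin n ⊕ Fin n) (Fin n ⊕ Fin n) ℂ := Matrix.fromBlocks 0 1 (-1) 0 with hJcd
    have hmapJ : Jr.map Complex.ofReal = Jc := by
      rw [hJr, hJcd]
      ext i j
      rcases i with i | i <;> rcases j with j | j <;>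
        simp [Matrix.fromBlocks, map_apply, Matrix.one_apply, apply_ite Complex.ofReal]
    have hmapmul : ∀ (A B : Matrix (Fin n ⊕ Fin n) (Fin n ⊕ Fin n) ℝ),
        (A * B).map Complex.ofReal = A.map Complex.ofReal * B.map Complex.ofReal :=
      fun A B => A.map_mul (f := Complex.ofRealHom)
    have hmapT : (Fᵀ).map Complex.ofReal = Fcᵀ := Matrix.transpose_map
    have hFJFc : Fc * Jc * Fcᵀ = Jc := by
      have := congrArg (fun X => X.map Complex.ofReal) hFJF
      simpa [hmapmul, hmapJ, hmapT] using this
    have hJc2 : Jc * Jc = -1 := by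
      have := congrArg (fun X => X.map Complex.ofReal) hJr2
      simp only [hmapmul, hmapJ] at this
      rw [this]
      ext i j
      simp [map_apply, Matrix.one_apply, apply_ite Complex.ofReal]
    -- conjTranspose facts
    have hMH : Mᴴ = M.map star := by
      ext i j
      simp only [conjTranspose_apply, map_apply]
      congr 1
      have := congrFun (congrFun hMsym i) j
      simpa using this
    have hJcH : Jcᴴ = -Jc := by
      rw [hJcd]
      ext i j
      rcases i with i | i <;> rcases j with j | j <;>
        simp [conjTranspose_apply, Matrix.fromBlocks, Matrix.one_apply,
          apply_ite (starRingEnd ℂ), eq_comm]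
    have hFcH : Fcᴴ = Fcᵀ := by
      ext i j
      simp [conjTranspose_apply, hFcd, map_apply, Complex.conj_ofReal]
    set A : Matrix (Fin n ⊕ Fin n) (Fin n ⊕ Fin n) ℂ := 1 + Fcᵀ with hA
    set B : Matrix (Fin n ⊕ Fin n) (Fin n ⊕ Fin n) ℂ := 1 - Fcᵀ with hB
    set w : (Fin n ⊕ Fin n) → ℂ := B *ᵥ z with hw
    set u : (Fin n ⊕ Fin n) → ℂ := Jc *ᵥ w with hu
    -- key equation
    have key : A *ᵥ z = (M.map star) *ᵥ u := by
      rw [Matrix.add_mulVec] at hz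
      have h4 : ((Jc * M)ᴴ * B) *ᵥ z = (Jc * M)ᴴ *ᵥ w := by
        rw [← Matrix.mulVec_mulVec]
      have h5 : (Jc * M)ᴴ = -(M.map star * Jc) := by
        rw [conjTranspose_mul, hMH, hJcH, mul_neg]
      rw [h4, h5] at hz
      have h6 : (-(M.map star * Jc)) *ᵥ w = -((M.map star) *ᵥ u) := by
        rw [Matrix.neg_mulVec, ← Matrix.mulVec_mulVec]
      rw [h6] at hz
      exact add_neg_eq_zero.mp hz
    -- the quadratic form identity
    set Sr : Matrix (Fin n ⊕ Fin n) (Fin n ⊕ Fin n) ℝ := Jr * Fᵀ - F * Jr with hSr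
    have hSrT : Srᵀ = Sr := by
      rw [hSr, transpose_sub, transpose_mul, transpose_mul, transpose_transpose]
      have hJrT : Jrᵀ = -Jr := by
        rw [hJr, Matrix.fromBlocks_transpose]
        ext i j
        rcases i with i | i <;> rcases j with j | j <;>
          simp [Matrix.fromBlocks]
      rw [hJrT]
      noncomm_ring
    have hSmap : Sr.map Complex.ofReal = Jc * Fcᵀ - Fc * Jc := by
      rw [hSr]
      have : (Jr * Fᵀ - F * Jr).map Complex.ofReal
          = (Jr * Fᵀ).map Complex.ofReal - (F * Jr).map Complex.ofReal := by
        apply Matrix.map_sub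
        intro a b
        simp
      rw [this, hmapmul, hmapmul, hmapJ, hmapT]
    have hT : (1 - Fc) * ((-Jc) * A) = -(Sr.map Complex.ofReal) := by
      rw [hSmap, hA]
      have h1 : Fc * (Jc * Fcᵀ) = Jc := by rw [← mul_assoc]; exact hFJFc
      have expand : (1 - Fc) * ((-Jc) * (1 + Fcᵀ))
          = -(Jc + Jc * Fcᵀ - Fc * Jc - Fc * (Jc * Fcᵀ)) := by noncomm_ring
      rw [expand, h1]
      noncomm_ring
    -- c real
    have hsu : star u = star z ᵥ* ((1 - Fc) * (-Jc)) := by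
      rw [hu, Matrix.star_mulVec, hJcH, hw, Matrix.star_mulVec]
      have hBH : Bᴴ = 1 - Fc := by
        rw [hB, conjTranspose_sub, conjTranspose_one]
        congr 1
        rw [← hFcH]
        exact conjTranspose_conjTranspose Fc
      rw [hBH, Matrix.vecMul_vecMul]
    have hc1 : star u ⬝ᵥ (A *ᵥ z) = star z ⬝ᵥ ((-(Sr.map Complex.ofReal)) *ᵥ z) := by
      calc star u ⬝ᵥ (A *ᵥ z)
          = (star z ᵥ* ((1 - Fc) * -Jc)) ⬝ᵥ (A *ᵥ z) := by rw [hsu]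
        _ = ((star z ᵥ* ((1 - Fc) * -Jc)) ᵥ* A) ⬝ᵥ z := Matrix.dotProduct_mulVec _ _ _
        _ = (star z ᵥ* ((1 - Fc) * -Jc * A)) ⬝ᵥ z := by rw [Matrix.vecMul_vecMul]
        _ = star z ⬝ᵥ (((1 - Fc) * -Jc * A) *ᵥ z) := (Matrix.dotProduct_mulVec _ _ _).symm
        _ = star z ⬝ᵥ ((-(Sr.map Complex.ofReal)) *ᵥ z) := by rw [mul_assoc, hT]
    have hnegmap : -(Sr.map Complex.ofReal) = (-Sr).map Complex.ofReal := by
      ext i j; simp [map_apply]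
    have hcreal : star (star u ⬝ᵥ (A *ᵥ z)) = star u ⬝ᵥ (A *ᵥ z) := by
      rw [hc1, hnegmap]
      exact aux_real (-Sr) (by rw [transpose_neg, hSrT]) z
    -- q and its conjugate
    have hq : star u ⬝ᵥ (A *ᵥ z) = star u ⬝ᵥ ((M.map star) *ᵥ u) := by rw [key]
    have hstar_dp : ∀ x y : (Fin n ⊕ Fin n) → ℂ, star (x ⬝ᵥ y) = star x ⬝ᵥ star y := by
      intro x y
      simp [dotProduct, star_sum, star_mul', mul_comm]
    have hMsH : (M.map star)ᴴ = M := by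
      ext i j
      simp only [conjTranspose_apply, map_apply, star_star]
      have := congrFun (congrFun hMsym i) j
      simpa using this
    have hqstar : star (star u ⬝ᵥ ((M.map star) *ᵥ u)) = star u ⬝ᵥ (M *ᵥ u) := by
      calc star (star u ⬝ᵥ ((M.map star) *ᵥ u))
          = u ⬝ᵥ star ((M.map star) *ᵥ u) := by rw [hstar_dp, star_star]
        _ = u ⬝ᵥ (star u ᵥ* (M.map star)ᴴ) := by rw [Matrix.star_mulVec]
        _ = (star u ᵥ* M) ⬝ᵥ u := by rw [hMsH, dotProduct_comm]
        _ = star u ⬝ᵥ (M *ᵥ u) := (Matrix.dotProduct_mulVec _ _ _).symm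
    have hdiff : star u ⬝ᵥ (((M.map star) - M) *ᵥ u) = 0 := by
      rw [Matrix.sub_mulVec, dotProduct_sub]
      rw [← hqstar, ← hq, hcreal, hq]
      ring
    have hMdecomp : (M.map star) - M = (-(2 : ℂ) * Complex.I) • ((M.map Complex.im).map Complex.ofReal) := by
      ext i j
      simp only [Matrix.sub_apply, map_apply, Matrix.smul_apply, smul_eq_mul]
      apply Complex.ext <;> simp [Complex.mul_re, Complex.mul_im] <;> ring
    have hImzero : star u ⬝ᵥ (((M.map Complex.im).map Complex.ofReal) *ᵥ u) = 0 := by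
      rw [hMdecomp] at hdiff
      rw [Matrix.smul_mulVec, dotProduct_smul] at hdiff
      have h2I : (-(2 : ℂ) * Complex.I) ≠ 0 := by
        simp [Complex.I_ne_zero]
      exact (smul_eq_zero.mp hdiff).resolve_left h2I
    have huz : u = 0 := aux_pos (M.map Complex.im) hMpos u hImzero
    have hwz : w = 0 := by
      have h7 : Jc *ᵥ u = 0 := by rw [huz]; simp
      rw [hu, Matrix.mulVec_mulVec, hJc2, Matrix.neg_mulVec, Matrix.one_mulVec] at h7
      simpa using h7
    refine ⟨hwz, ?_⟩
    have hAz : A *ᵥ z = 0 := by rw [key, huz]; simp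
    rw [hA, Matrix.add_mulVec, Matrix.one_mulVec] at hAz
    rw [hw, hB, Matrix.sub_mulVec, Matrix.one_mulVec] at hwz
    funext i
    have e1 := congrFun hAz i
    have e2 := congrFun hwz i
    simp only [Pi.add_apply, Pi.sub_apply, Pi.zero_apply] at e1 e2
    have : (2 : ℂ) * z i = 0 := by linear_combination e1 + e2
    simpa using this
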